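/- For any graph G of order n ≥ 2, α'(G) + α'(complement of G) ≥ n/2, with equality if and only if G is an empty graph or a complete graph. -/

import Mathlib

open Finset
open scoped Classical

noncomputable section

/-- A fractional matching of a simple graph `G`: a weight on `Sym2 V` supported on the
edge set, with values in `[0,1]`, such that the total weight at each vertex is at most 1. -/
def SimpleGraph.IsFracMatching {V : Type*} [Fintype V] (G : SimpleGraph V)
    (f : Sym2 V → ℝ) : Prop :=
  (∀ e, 0 ≤ f e ∧ f e ≤ 1) ∧ (∀ e, e ∉ G.edgeSet → f e = 0) ∧
    ∀ v : V, ∑ e ∈ G.incidenceFinset v, f e ≤ 1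

/-- The total weight `f(G)` of a fractional matching. -/
def SimpleGraph.fracWeight {V : Type*} [Fintype V] (G : SimpleGraph V)
    (f : Sym2 V → ℝ) : ℝ :=
  ∑ e ∈ G.edgeFinset, f e

/-- The weight `f(v)` of a vertex: the sum over edges incident to `v`. -/
def SimpleGraph.vertexWeight {V : Type*} [Fintype V] (G : SimpleGraph V)
    (f : Sym2 V → ℝ) (v : V) : ℝ :=
  ∑ e ∈ G.incidenceFinset v, f e

/-- The fractional matching number `α'(G)`. -/
def SimpleGraph.fracNu {V : Type*} [Fintype V] (G : SimpleGraph V) : ℝ :=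
  sSup {x : ℝ | ∃ f, G.IsFracMatching f ∧ G.fracWeight f = x}

end

noncomputable section Aux

open SimpleGraph

variable {V : Type*} [Fintype V]

private lemma sum_mem_sym2 (f : Sym2 V → ℝ) (e : Sym2 V) (he : ¬ e.IsDiag) :
    ∑ v : V, (if v ∈ e then f e else 0) = 2 * f e := by
  induction e with
  | _ a b =>
    have hab : a ≠ b := by simpa using he
    have hfil : (Finset.univ.filter (fun v => v ∈ (s(a, b) : Sym2 V))) = {a, b} := by
      ext v; simp [Sym2.mem_iff]
    rw [← Finset.sum_filter, hfil, Finset.sum_pair hab]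
    ring

private lemma sum_vertexWeight (G : SimpleGraph V) (f : Sym2 V → ℝ) :
    ∑ v, G.vertexWeight f v = 2 * G.fracWeight f := by
  unfold SimpleGraph.vertexWeight SimpleGraph.fracWeight
  simp_rw [incidenceFinset_eq_filter, Finset.sum_filter]
  rw [Finset.sum_comm, Finset.mul_sum]
  exact Finset.sum_congr rfl fun e he =>
    sum_mem_sym2 f e (G.not_isDiag_of_mem_edgeFinset he)

private lemma fracWeight_le_half (G : SimpleGraph V) {f : Sym2 V → ℝ}
    (hf : G.IsFracMatching f) : G.fracWeight f ≤ (Fintype.card V : ℝ) / 2 := by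
  have h := sum_vertexWeight G f
  have h2 : ∑ v, G.vertexWeight f v ≤ ∑ _v : V, (1 : ℝ) :=
    Finset.sum_le_sum fun v _ => hf.2.2 v
  simp only [Finset.sum_const, Finset.card_univ, nsmul_eq_mul, mul_one] at h2
  linarith

private lemma zero_isFracMatching (G : SimpleGraph V) :
    G.IsFracMatching (fun _ => 0) :=
  ⟨fun _ => ⟨le_refl 0, zero_le_one⟩, fun _ _ => rfl, fun v => by simp⟩

private lemma fracNu_set_nonempty (G : SimpleGraph V) :
    Set.Nonempty {x : ℝ | ∃ f, G.IsFracMatching f ∧ G.fracWeight f = x} :=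
  ⟨G.fracWeight (fun _ => 0), fun _ => 0, zero_isFracMatching G, rfl⟩

private lemma fracNu_bddAbove (G : SimpleGraph V) :
    BddAbove {x : ℝ | ∃ f, G.IsFracMatching f ∧ G.fracWeight f = x} :=
  ⟨(Fintype.card V : ℝ) / 2, fun x ⟨f, hf, hx⟩ => hx ▸ fracWeight_le_half G hf⟩

private lemma le_fracNu (G : SimpleGraph V) {f : Sym2 V → ℝ}
    (hf : G.IsFracMatching f) : G.fracWeight f ≤ G.fracNu :=
  le_csSup (fracNu_bddAbove G) ⟨f, hf, rfl⟩

private lemma fracNu_le_half (G : SimpleGraph V) :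
    G.fracNu ≤ (Fintype.card V : ℝ) / 2 :=
  csSup_le (fracNu_set_nonempty G) fun x ⟨f, hf, hx⟩ => hx ▸ fracWeight_le_half G hf

/-- The uniform fractional matching with weight `1/(n-1)` on every edge. -/
private def unifW (G : SimpleGraph V) : Sym2 V → ℝ :=
  fun e => if e ∈ G.edgeSet then ((Fintype.card V : ℝ) - 1)⁻¹ else 0

private lemma card_sub_one_pos (hn : 2 ≤ Fintype.card V) :
    (0 : ℝ) < (Fintype.card V : ℝ) - 1 := by
  have : (2 : ℝ) ≤ (Fintype.card V : ℝ) := by exact_mod_cast hn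
  linarith

private lemma unifW_vertexWeight (G : SimpleGraph V) (v : V) :
    G.vertexWeight (unifW G) v = (G.degree v : ℝ) * ((Fintype.card V : ℝ) - 1)⁻¹ := by
  unfold SimpleGraph.vertexWeight
  have h : ∀ e ∈ G.incidenceFinset v, unifW G e = ((Fintype.card V : ℝ) - 1)⁻¹ := by
    intro e he
    have : e ∈ G.edgeSet := G.incidenceSet_subset v (by simpa using he)
    simp [unifW, this]
  rw [Finset.sum_congr rfl h, Finset.sum_const, nsmul_eq_mul,
    G.card_incidenceFinset_eq_degree]

private lemma unifW_isFracMatching (G : SimpleGraph V) (hn : 2 ≤ Fintype.card V) :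
    G.IsFracMatching (unifW G) := by
  have hpos := card_sub_one_pos (V := V) hn
  have hc1 : ((Fintype.card V : ℝ) - 1)⁻¹ ≤ 1 := by
    rw [inv_le_one_iff₀]
    right
    have : (2 : ℝ) ≤ (Fintype.card V : ℝ) := by exact_mod_cast hn
    linarith
  refine ⟨fun e => ?_, fun e he => by simp [unifW, he], fun v => ?_⟩
  · unfold unifW
    split
    · exact ⟨le_of_lt (inv_pos.mpr hpos), hc1⟩
    · exact ⟨le_refl 0, zero_le_one⟩
  · have := unifW_vertexWeight G v
    unfold SimpleGraph.vertexWeight at this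
    rw [this]
    have hdeg : (G.degree v : ℝ) ≤ (Fintype.card V : ℝ) - 1 := by
      have h := G.degree_lt_card_verts v
      have h' : (G.degree v : ℝ) + 1 ≤ (Fintype.card V : ℝ) := by exact_mod_cast h
      linarith
    calc (G.degree v : ℝ) * ((Fintype.card V : ℝ) - 1)⁻¹
        ≤ ((Fintype.card V : ℝ) - 1) * ((Fintype.card V : ℝ) - 1)⁻¹ :=
          mul_le_mul_of_nonneg_right hdeg (le_of_lt (inv_pos.mpr hpos))
      _ = 1 := mul_inv_cancel₀ (ne_of_gt hpos)

private lemma degree_congr (G : SimpleGraph V) (v : V)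
    (i1 i2 : Fintype (G.neighborSet v)) :
    @SimpleGraph.degree V G v i1 = @SimpleGraph.degree V G v i2 := by
  cases Subsingleton.elim i1 i2
  rfl

private lemma degree_add_compl (G : SimpleGraph V) (hn : 2 ≤ Fintype.card V) (v : V) :
    (G.degree v : ℝ) + (Gᶜ.degree v : ℝ) = (Fintype.card V : ℝ) - 1 := by
  have h1 : G.degree v < Fintype.card V := G.degree_lt_card_verts v
  have h2 : G.degree v ≤ Fintype.card V - 1 := Nat.le_pred_of_lt h1
  have h3 : Gᶜ.degree v = Fintype.card V - 1 - G.degree v := G.degree_compl v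
  have h4 : (1 : ℕ) ≤ Fintype.card V := le_trans (by norm_num) hn
  rw [h3]
  push_cast [Nat.cast_sub h2, Nat.cast_sub h4]
  ring

private lemma unifW_weight_add (G : SimpleGraph V) (hn : 2 ≤ Fintype.card V) :
    G.fracWeight (unifW G) + Gᶜ.fracWeight (unifW Gᶜ) = (Fintype.card V : ℝ) / 2 := by
  have hpos := card_sub_one_pos (V := V) hn
  have h1 := sum_vertexWeight G (unifW G)
  have h2 := sum_vertexWeight Gᶜ (unifW Gᶜ)
  have h3 : ∑ v, G.vertexWeight (unifW G) v + ∑ v, Gᶜ.vertexWeight (unifW Gᶜ) v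
      = (Fintype.card V : ℝ) := by
    rw [← Finset.sum_add_distrib]
    have : ∀ v : V, G.vertexWeight (unifW G) v + Gᶜ.vertexWeight (unifW Gᶜ) v = 1 := by
      intro v
      have hd := degree_add_compl G hn v
      rw [unifW_vertexWeight, unifW_vertexWeight, ← add_mul,
        degree_congr Gᶜ v _ _ , hd, mul_inv_cancel₀ (ne_of_gt hpos)]
    rw [Finset.sum_congr rfl fun v _ => this v]
    simp
  linarith

/-- Improvement lemma: an edge with both endpoints of degree at most `n-2` allows
increasing the uniform fractional matching. -/
private lemma improved (G : SimpleGraph V) (hn : 3 ≤ Fintype.card V) {a b : V}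
    (hab : G.Adj a b) (hda : G.degree a ≤ Fintype.card V - 2)
    (hdb : G.degree b ≤ Fintype.card V - 2) :
    G.fracWeight (unifW G) + ((Fintype.card V : ℝ) - 1)⁻¹ ≤ G.fracNu := by
  have hn2 : 2 ≤ Fintype.card V := le_trans (by norm_num) hn
  have hpos := card_sub_one_pos (V := V) hn2
  set c : ℝ := ((Fintype.card V : ℝ) - 1)⁻¹ with hc
  have hcpos : 0 < c := inv_pos.mpr hpos
  have hn3 : (3 : ℝ) ≤ (Fintype.card V : ℝ) := by exact_mod_cast hn
  have h2c : 2 * c ≤ 1 := by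
    rw [hc]
    rw [mul_inv_le_iff₀ hpos, one_mul]
    linarith
  set g : Sym2 V → ℝ := fun e => unifW G e + (if e = s(a, b) then c else 0) with hg
  have hmem : s(a, b) ∈ G.edgeSet := hab
  have hunif_ab : unifW G s(a, b) = c := by simp [unifW, hmem, hc]
  have hgm : G.IsFracMatching g := by
    have hbase := unifW_isFracMatching G hn2
    refine ⟨fun e => ?_, fun e he => ?_, fun v => ?_⟩
    · constructor
      · exact add_nonneg (hbase.1 e).1 (by positivity)
      · by_cases h : e = s(a, b)
        · subst h
          have hge : g s(a, b) = c + c := by simp [hg, hunif_ab]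
          rw [hge]; linarith
        · simp only [hg, if_neg h, add_zero]
          exact (hbase.1 e).2
    · have h1 : unifW G e = 0 := hbase.2.1 e he
      have h2 : e ≠ s(a, b) := fun h => he (h ▸ hmem)
      simp [hg, h1, h2]
    · have hsplit : ∑ e ∈ G.incidenceFinset v, g e
          = G.vertexWeight (unifW G) v
            + ∑ e ∈ G.incidenceFinset v, (if e = s(a, b) then c else 0) := by
        rw [hg]
        rw [Finset.sum_add_distrib]
        rfl
      rw [hsplit]
      have hind : ∑ e ∈ G.incidenceFinset v, (if e = s(a, b) then c else 0)
          = if s(a, b) ∈ G.incidenceFinset v then c else 0 := by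
        rw [Finset.sum_ite_eq' (G.incidenceFinset v) (s(a, b)) (fun _ => c)]
      rw [hind, unifW_vertexWeight]
      by_cases hv : s(a, b) ∈ G.incidenceFinset v
      · rw [if_pos hv]
        have hv' : v = a ∨ v = b := by
          have := (G.mem_incidenceFinset (v := v) (s(a, b))).1 hv
          have := this.2
          simpa [Sym2.mem_iff] using this
        have hdv : G.degree v ≤ Fintype.card V - 2 := by
          rcases hv' with rfl | rfl <;> assumption
        have hdvR : (G.degree v : ℝ) ≤ (Fintype.card V : ℝ) - 2 := by
          have h2n : (2 : ℕ) ≤ Fintype.card V := hn2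
          calc (G.degree v : ℝ) ≤ ((Fintype.card V - 2 : ℕ) : ℝ) := by exact_mod_cast hdv
            _ = (Fintype.card V : ℝ) - 2 := by
                push_cast [Nat.cast_sub h2n]; ring
        calc (G.degree v : ℝ) * c + c ≤ ((Fintype.card V : ℝ) - 2) * c + c :=
              add_le_add_left (mul_le_mul_of_nonneg_right hdvR hcpos.le) c
          _ = ((Fintype.card V : ℝ) - 1) * c := by ring
          _ = 1 := mul_inv_cancel₀ (ne_of_gt hpos)
      · rw [if_neg hv, add_zero]
        have hdeg : (G.degree v : ℝ) ≤ (Fintype.card V : ℝ) - 1 := by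
          have h := G.degree_lt_card_verts v
          have h' : (G.degree v : ℝ) + 1 ≤ (Fintype.card V : ℝ) := by exact_mod_cast h
          linarith
        calc (G.degree v : ℝ) * c ≤ ((Fintype.card V : ℝ) - 1) * c :=
              mul_le_mul_of_nonneg_right hdeg hcpos.le
          _ = 1 := mul_inv_cancel₀ (ne_of_gt hpos)
  have hw : G.fracWeight g = G.fracWeight (unifW G) + c := by
    unfold SimpleGraph.fracWeight
    rw [hg]
    rw [Finset.sum_add_distrib]
    congr 1
    rw [Finset.sum_ite_eq' G.edgeFinset (s(a, b)) (fun _ => c)]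
    rw [if_pos (by rwa [SimpleGraph.mem_edgeFinset])]
  calc G.fracWeight (unifW G) + c = G.fracWeight g := hw.symm
    _ ≤ G.fracNu := le_fracNu G hgm

private lemma exists_dominating {G : SimpleGraph V} {u : V}
    (hu : Fintype.card V - 1 ≤ G.degree u) {w : V} (hw : w ≠ u) : G.Adj u w := by
  have hsub : G.neighborFinset u ⊆ Finset.univ.erase u := by
    intro x hx
    rw [Finset.mem_erase]
    exact ⟨(G.ne_of_adj ((G.mem_neighborFinset u x).mp hx)).symm, Finset.mem_univ x⟩
  have hcard : (Finset.univ.erase u).card ≤ (G.neighborFinset u).card := by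
    rw [Finset.card_erase_of_mem (Finset.mem_univ u), Finset.card_univ]
    exact hu
  have heq := Finset.eq_of_subset_of_card_le hsub hcard
  have hmem : w ∈ G.neighborFinset u := by
    rw [heq, Finset.mem_erase]
    exact ⟨hw, Finset.mem_univ w⟩
  exact (G.mem_neighborFinset u w).mp hmem

end Aux

theorem stmt_16 {V : Type*} [Fintype V] (G : SimpleGraph V)
    (hn : 2 ≤ Fintype.card V) :
    G.fracNu + Gᶜ.fracNu ≥ (Fintype.card V : ℝ) / 2 ∧
    (G.fracNu + Gᶜ.fracNu = (Fintype.card V : ℝ) / 2 ↔ G = ⊥ ∨ G = ⊤) := by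
  classical
  have hpos := card_sub_one_pos (V := V) hn
  have key : ∀ H : SimpleGraph V,
      H.fracWeight (unifW H) + Hᶜ.fracWeight (unifW Hᶜ) = (Fintype.card V : ℝ) / 2 :=
    fun H => unifW_weight_add H hn
  have hge : ∀ H : SimpleGraph V, (Fintype.card V : ℝ) / 2 ≤ H.fracNu + Hᶜ.fracNu := by
    intro H
    rw [← key H]
    exact add_le_add (le_fracNu H (unifW_isFracMatching H hn))
      (le_fracNu Hᶜ (unifW_isFracMatching Hᶜ hn))
  refine ⟨hge G, ?_, ?_⟩
  · -- equality → G = ⊥ ∨ G = ⊤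
    intro heq
    by_contra hcon
    push_neg at hcon
    obtain ⟨hbot, htop⟩ := hcon
    -- get an edge of G and an edge of Gᶜ
    obtain ⟨⟨a, b⟩, hab⟩ : G.edgeSet.Nonempty := by
      rwa [SimpleGraph.edgeSet_nonempty]
    obtain ⟨⟨x, y⟩, hxy⟩ : Gᶜ.edgeSet.Nonempty := by
      rw [SimpleGraph.edgeSet_nonempty]
      intro h
      apply htop
      have h2 := congrArg (Compl.compl : SimpleGraph V → SimpleGraph V) h
      rwa [compl_compl, compl_bot] at h2
    rw [SimpleGraph.mem_edgeSet] at hab hxy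
    -- rule out n = 2
    rcases Nat.lt_or_ge (Fintype.card V) 3 with hlt | hn3
    · have hcard2 : Fintype.card V = 2 := le_antisymm (by omega) hn
      have huniv : ({a, b} : Finset V) = Finset.univ := by
        apply Finset.eq_univ_of_card
        rw [Finset.card_pair (G.ne_of_adj hab), hcard2]
      have hx' : x ∈ ({a, b} : Finset V) := huniv ▸ Finset.mem_univ x
      have hy' : y ∈ ({a, b} : Finset V) := huniv ▸ Finset.mem_univ y
      simp only [Finset.mem_insert, Finset.mem_singleton] at hx' hy'
      have hxyne : x ≠ y := Gᶜ.ne_of_adj hxy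
      have : G.Adj x y := by
        rcases hx' with rfl | rfl <;> rcases hy' with rfl | rfl
        · exact absurd rfl hxyne
        · exact hab
        · exact hab.symm
        · exact absurd rfl hxyne
      exact hxy.2 this
    · -- n ≥ 3
      set n := Fintype.card V with hnn
      have himp : G.fracWeight (unifW G) + Gᶜ.fracWeight (unifW Gᶜ)
          + ((n : ℝ) - 1)⁻¹ ≤ G.fracNu + Gᶜ.fracNu := by
        by_cases hA : G.degree a ≤ n - 2 ∧ G.degree b ≤ n - 2
        · have h1 := improved G hn3 hab hA.1 hA.2
          have h2 := le_fracNu Gᶜ (unifW_isFracMatching Gᶜ hn)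
          linarith
        · -- some endpoint has full degree; then x, y have Gᶜ-degree ≤ n - 2
          have hu : ∃ u : V, n - 1 ≤ G.degree u := by
            rcases not_and_or.mp hA with h | h
            · exact ⟨a, by omega⟩
            · exact ⟨b, by omega⟩
          obtain ⟨u, hu⟩ := hu
          have hdeg1 : ∀ w : V, 1 ≤ G.degree w := by
            intro w
            by_cases hw : w = u
            · subst hw; omega
            · have hadj : G.Adj u w := exists_dominating hu hw
              have hm : u ∈ G.neighborFinset w :=
                (G.mem_neighborFinset w u).mpr hadj.symm
              exact Finset.card_pos.mpr ⟨u, hm⟩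
          have hcompl_deg : ∀ w : V, Gᶜ.degree w ≤ n - 2 := by
            intro w
            have h3 : Gᶜ.degree w = n - 1 - G.degree w := G.degree_compl w
            have := hdeg1 w
            omega
          have h1 := improved Gᶜ hn3 hxy
            (le_of_eq_of_le (degree_congr Gᶜ x _ _) (hcompl_deg x))
            (le_of_eq_of_le (degree_congr Gᶜ y _ _) (hcompl_deg y))
          have h2 := le_fracNu G (unifW_isFracMatching G hn)
          linarith
      rw [key G] at himp
      have : (0:ℝ) < ((n : ℝ) - 1)⁻¹ := inv_pos.mpr hpos
      linarith
  · -- G = ⊥ or G = ⊤ → equality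
    have hbotcase : (⊥ : SimpleGraph V).fracNu = 0 := by
      apply le_antisymm
      · apply csSup_le (fracNu_set_nonempty _)
        rintro x ⟨f, hf, rfl⟩
        unfold SimpleGraph.fracWeight
        refine le_of_eq (Finset.sum_eq_zero fun e he => ?_)
        simp only [SimpleGraph.edgeFinset, Set.mem_toFinset, SimpleGraph.edgeSet_bot,
          Set.mem_empty_iff_false] at he
      · have := le_fracNu (⊥ : SimpleGraph V) (zero_isFracMatching _)
        simpa [SimpleGraph.fracWeight] using this
    have htopcase : (⊤ : SimpleGraph V).fracNu = (Fintype.card V : ℝ) / 2 := by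
      apply le_antisymm (fracNu_le_half _)
      have h := key ⊥
      have hb : (⊥ : SimpleGraph V).fracWeight (unifW ⊥) = 0 := by
        unfold SimpleGraph.fracWeight
        refine Finset.sum_eq_zero fun e he => ?_
        simp only [SimpleGraph.edgeFinset, Set.mem_toFinset, SimpleGraph.edgeSet_bot,
          Set.mem_empty_iff_false] at he
      rw [hb, zero_add] at h
      have hbc : (⊥ : SimpleGraph V)ᶜ = ⊤ := compl_bot
      rw [hbc] at h
      rw [← h]
      exact le_fracNu _ (unifW_isFracMatching _ hn)
    rintro (rfl | rfl)
    · rw [hbotcase]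
      have : (⊥ : SimpleGraph V)ᶜ = ⊤ := compl_bot
      rw [this, htopcase, zero_add]
    · rw [htopcase]
      have : (⊤ : SimpleGraph V)ᶜ = ⊥ := compl_top
      rw [this, hbotcase, add_zero]
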